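/- Degenerate (rectilinear) case: if a Kepler solution r : I → ℝ³ satisfies h(t₀) = r(t₀) × ṙ(t₀) = 0 for some t₀ ∈ I, then the normalized position r(t)/|r(t)| is constant on I; equivalently, e(t) = −r(t)/|r(t)| for all t ∈ I and the trajectory is contained in the line through the origin with direction r(t₀)/|r(t₀)|. -/

import Mathlib

open scoped InnerProductSpace

/-- Cross product in ℝ³ (modelled as `EuclideanSpace ℝ (Fin 3)`). -/
noncomputable def cross3 (a b : EuclideanSpace ℝ (Fin 3)) : EuclideanSpace ℝ (Fin 3) :=
  (WithLp.equiv 2 (Fin 3 → ℝ)).symm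
    ![a 1 * b 2 - a 2 * b 1, a 2 * b 0 - a 0 * b 2, a 0 * b 1 - a 1 * b 0]

/-- The vector (x, y, z) ∈ ℝ³. -/
noncomputable def v3 (x y z : ℝ) : EuclideanSpace ℝ (Fin 3) :=
  (WithLp.equiv 2 (Fin 3 → ℝ)).symm ![x, y, z]

lemma const_of_hasDerivAt_zero {E : Type*} [NormedAddCommGroup E] [NormedSpace ℝ E]
    {I : Set ℝ} (hIopen : IsOpen I) (hconv : Convex ℝ I) {f : ℝ → E}
    (hf : ∀ t ∈ I, HasDerivAt f 0 t) {x y : ℝ} (hx : x ∈ I) (hy : y ∈ I) :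
    f x = f y := by
  apply hconv.is_const_of_fderivWithin_eq_zero
    (fun t ht => ((hf t ht).differentiableAt).differentiableWithinAt) ?_ hx hy
  intro t ht
  rw [fderivWithin_of_isOpen hIopen ht, (hf t ht).hasFDerivAt.fderiv]
  ext u
  simp

lemma cross3_apply (a b : EuclideanSpace ℝ (Fin 3)) (i : Fin 3) :
    cross3 a b i =
      ![a 1 * b 2 - a 2 * b 1, a 2 * b 0 - a 0 * b 2, a 0 * b 1 - a 1 * b 0] i := by
  rfl

lemma cross3_zero_right (a : EuclideanSpace ℝ (Fin 3)) : cross3 a 0 = 0 := by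
  ext i
  have h0 : ∀ j : Fin 3, (0 : EuclideanSpace ℝ (Fin 3)) j = 0 := fun _ => rfl
  fin_cases i <;> simp [cross3_apply, h0]

/-- Degenerate (rectilinear) case: if h(t₀) = 0 for some t₀ ∈ I, then r(t)/|r(t)| is
constant on I; equivalently e(t) = −r(t)/|r(t)| on I and the trajectory is contained in
the line through the origin with direction r(t₀)/|r(t₀)|. -/
theorem degenerate_rectilinear_case
(μ : ℝ) (hμ : 0 < μ) (I : Set ℝ) (hIopen : IsOpen I) (hIconn : I.OrdConnected)
    (r : ℝ → EuclideanSpace ℝ (Fin 3))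
    (hdiff : ∀ t ∈ I, DifferentiableAt ℝ r t)
    (hdiff' : ∀ t ∈ I, DifferentiableAt ℝ (deriv r) t)
    (hne : ∀ t ∈ I, r t ≠ 0)
    (hode : ∀ t ∈ I, deriv (deriv r) t = -(μ / ‖r t‖ ^ 3) • r t)
    (t₀ : ℝ) (ht₀ : t₀ ∈ I) (hh : cross3 (r t₀) (deriv r t₀) = 0) :
    (∀ t ∈ I, ‖r t‖⁻¹ • r t = ‖r t₀‖⁻¹ • r t₀) ∧
    (∀ t ∈ I, μ⁻¹ • cross3 (deriv r t) (cross3 (r t) (deriv r t)) - ‖r t‖⁻¹ • r t =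
        -(‖r t‖⁻¹ • r t)) ∧
    (∀ t ∈ I, ∃ c : ℝ, r t = c • (‖r t₀‖⁻¹ • r t₀)) := by
  have hconv : Convex ℝ I := convex_iff_ordConnected.mpr hIconn
  have hdr : ∀ t ∈ I, HasDerivAt r (deriv r t) t := fun t ht => (hdiff t ht).hasDerivAt
  have hdr' : ∀ t ∈ I, HasDerivAt (deriv r) (deriv (deriv r) t) t :=
    fun t ht => (hdiff' t ht).hasDerivAt
  -- component derivatives
  have hcomp : ∀ (i : Fin 3), ∀ t ∈ I,
      HasDerivAt (fun s => r s i) (deriv r t i) t := by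
    intro i t ht
    simpa [Function.comp_def] using (EuclideanSpace.proj i).hasFDerivAt.comp_hasDerivAt t (hdr t ht)
  have hcomp' : ∀ (i : Fin 3), ∀ t ∈ I,
      HasDerivAt (fun s => deriv r s i) (-(μ / ‖r t‖ ^ 3) * r t i) t := by
    intro i t ht
    have := (EuclideanSpace.proj i).hasFDerivAt.comp_hasDerivAt t (hdr' t ht)
    simpa [hode t ht, Function.comp_def] using this
  -- angular momentum components are constant
  have key : ∀ a b : Fin 3, ∀ t ∈ I,
      r t a * deriv r t b - r t b * deriv r t a
        = r t₀ a * deriv r t₀ b - r t₀ b * deriv r t₀ a := by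
    intro a b t ht
    have hg : ∀ s ∈ I, HasDerivAt
        (fun u => r u a * deriv r u b - r u b * deriv r u a) 0 s := by
      intro s hs
      have h1 := ((hcomp a s hs).mul (hcomp' b s hs)).sub
        ((hcomp b s hs).mul (hcomp' a s hs))
      have e : deriv r s a * deriv r s b + r s a * (-(μ / ‖r s‖ ^ 3) * r s b) -
          (deriv r s b * deriv r s a + r s b * (-(μ / ‖r s‖ ^ 3) * r s a)) = 0 := by ring
      rw [e] at h1
      exact h1
    exact const_of_hasDerivAt_zero hIopen hconv hg ht ht₀
  -- the three cross components at t₀ vanish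
  have H0 : r t₀ 1 * deriv r t₀ 2 - r t₀ 2 * deriv r t₀ 1 = 0 := by
    have := congrArg (fun v : EuclideanSpace ℝ (Fin 3) => v 0) hh
    simpa [cross3_apply] using this
  have H1 : r t₀ 2 * deriv r t₀ 0 - r t₀ 0 * deriv r t₀ 2 = 0 := by
    have := congrArg (fun v : EuclideanSpace ℝ (Fin 3) => v 1) hh
    simpa [cross3_apply] using this
  have H2 : r t₀ 0 * deriv r t₀ 1 - r t₀ 1 * deriv r t₀ 0 = 0 := by
    have := congrArg (fun v : EuclideanSpace ℝ (Fin 3) => v 2) hh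
    simpa [cross3_apply] using this
  have Z0 : ∀ t ∈ I, r t 1 * deriv r t 2 - r t 2 * deriv r t 1 = 0 :=
    fun t ht => (key 1 2 t ht).trans H0
  have Z1 : ∀ t ∈ I, r t 2 * deriv r t 0 - r t 0 * deriv r t 2 = 0 :=
    fun t ht => (key 2 0 t ht).trans H1
  have Z2 : ∀ t ∈ I, r t 0 * deriv r t 1 - r t 1 * deriv r t 0 = 0 :=
    fun t ht => (key 0 1 t ht).trans H2
  -- angular momentum is zero on I
  have hzero : ∀ t ∈ I, cross3 (r t) (deriv r t) = 0 := by
    intro t ht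
    rw [cross3, Z0 t ht, Z1 t ht, Z2 t ht]
    ext i
    fin_cases i <;> rfl
  -- from cross = 0 : ⟪r,r⟫ • r' = ⟪r,r'⟫ • r
  have hpar : ∀ t ∈ I, ⟪r t, r t⟫_ℝ • deriv r t = ⟪r t, deriv r t⟫_ℝ • r t := by
    intro t ht
    have h0 := Z0 t ht; have h1 := Z1 t ht; have h2 := Z2 t ht
    have q0 : (r t 0 * r t 0 + r t 1 * r t 1 + r t 2 * r t 2) * deriv r t 0 =
        (r t 0 * deriv r t 0 + r t 1 * deriv r t 1 + r t 2 * deriv r t 2) * r t 0 := by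
      linear_combination r t 2 * h1 - r t 1 * h2
    have q1 : (r t 0 * r t 0 + r t 1 * r t 1 + r t 2 * r t 2) * deriv r t 1 =
        (r t 0 * deriv r t 0 + r t 1 * deriv r t 1 + r t 2 * deriv r t 2) * r t 1 := by
      linear_combination r t 0 * h2 - r t 2 * h0
    have q2 : (r t 0 * r t 0 + r t 1 * r t 1 + r t 2 * r t 2) * deriv r t 2 =
        (r t 0 * deriv r t 0 + r t 1 * deriv r t 1 + r t 2 * deriv r t 2) * r t 2 := by
      linear_combination r t 1 * h0 - r t 0 * h1
    ext i
    simp only [PiLp.smul_apply, smul_eq_mul, PiLp.inner_apply, RCLike.inner_apply,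
      starRingEnd_apply, star_trivial]
    rw [Fin.sum_univ_three, Fin.sum_univ_three]
    fin_cases i <;> simp only [Fin.reduceFinMk, Fin.zero_eta, Fin.mk_one]
    · linear_combination q0
    · linear_combination q1
    · linear_combination q2
  -- the unit vector has zero derivative
  have hunit : ∀ t ∈ I, HasDerivAt (fun s => ‖r s‖⁻¹ • r s) 0 t := by
    intro t ht
    have hn : ‖r t‖ ≠ 0 := norm_ne_zero_iff.mpr (hne t ht)
    have hq : HasDerivAt (fun s => ⟪r s, r s⟫_ℝ)
        (⟪r t, deriv r t⟫_ℝ + ⟪deriv r t, r t⟫_ℝ) t :=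
      (hdr t ht).inner ℝ (hdr t ht)
    have hqt : ⟪r t, r t⟫_ℝ ≠ 0 := by
      rw [real_inner_self_eq_norm_sq]; positivity
    have hnorm_eq : (fun s => ‖r s‖) = fun s => Real.sqrt ⟪r s, r s⟫_ℝ := by
      funext s
      rw [real_inner_self_eq_norm_sq, Real.sqrt_sq (norm_nonneg _)]
    have hrt : Real.sqrt ⟪r t, r t⟫_ℝ = ‖r t‖ := by
      rw [real_inner_self_eq_norm_sq, Real.sqrt_sq (norm_nonneg _)]
    have hs : HasDerivAt (fun s => ‖r s‖)
        ((⟪r t, deriv r t⟫_ℝ + ⟪deriv r t, r t⟫_ℝ) / (2 * Real.sqrt ⟪r t, r t⟫_ℝ)) t := by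
      rw [hnorm_eq]
      exact hq.sqrt hqt
    have hsI : HasDerivAt (fun s => ‖r s‖⁻¹)
        (-((⟪r t, deriv r t⟫_ℝ + ⟪deriv r t, r t⟫_ℝ) / (2 * Real.sqrt ⟪r t, r t⟫_ℝ)) /
          ‖r t‖ ^ 2) t := hs.inv hn
    have hD := hsI.smul (hdr t ht)
    have hdr_eq : deriv r t = (⟪r t, deriv r t⟫_ℝ / ‖r t‖ ^ 2) • r t := by
      have h2 := hpar t ht
      rw [real_inner_self_eq_norm_sq] at h2
      have hn2 : (‖r t‖ ^ 2) ≠ 0 := by positivity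
      rw [div_eq_inv_mul, ← smul_smul, ← h2, smul_smul, inv_mul_cancel₀ hn2, one_smul]
    have hzero' : ‖r t‖⁻¹ • deriv r t +
        (-((⟪r t, deriv r t⟫_ℝ + ⟪deriv r t, r t⟫_ℝ) / (2 * Real.sqrt ⟪r t, r t⟫_ℝ)) /
          ‖r t‖ ^ 2) • r t = 0 := by
      rw [real_inner_comm (deriv r t) (r t), hrt]
      generalize hP : ⟪deriv r t, r t⟫_ℝ = P
      rw [real_inner_comm, hP] at hdr_eq
      rw [hdr_eq, smul_smul, ← add_smul]
      convert zero_smul ℝ (r t) using 2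
      field_simp
      ring
    rw [hzero'] at hD
    exact hD
  -- part 1
  have part1 : ∀ t ∈ I, ‖r t‖⁻¹ • r t = ‖r t₀‖⁻¹ • r t₀ :=
    fun t ht => const_of_hasDerivAt_zero hIopen hconv hunit ht ht₀
  refine ⟨part1, ?_, ?_⟩
  · intro t ht
    rw [hzero t ht, cross3_zero_right, smul_zero, zero_sub]
  · intro t ht
    refine ⟨‖r t‖, ?_⟩
    rw [← part1 t ht, smul_smul, mul_inv_cancel₀ (norm_ne_zero_iff.mpr (hne t ht)), one_smul]
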